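/- Let r be an (A, L, T) Laver ranking where L is a linear order with least element 0, greatest element ∞, and a successor function, and let r̃ denote the canonical ordinal-valued Laver ranking. Then there is no node σ with r(σ) in the well-founded part of L and r(σ) < r̃(σ) (identifying the well-founded initial segment of L with ordinals). -/

import Mathlib

/-- A tree on ω: a set of finite strings closed under initial segments. -/
def IsTree (T : Set (List ℕ)) : Prop := ∀ σ ∈ T, ∀ ρ : List ℕ, ρ <+: σ → ρ ∈ T

/-- A Laver tree with stem `τ`: a tree containing `τ`, all of whose elements are
comparable with `τ`, and in which every node extending `τ` has infinitely many
immediate children. -/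
def IsLaverTree (T : Set (List ℕ)) (τ : List ℕ) : Prop :=
  IsTree T ∧ τ ∈ T ∧ (∀ σ ∈ T, τ <+: σ ∨ σ <+: τ) ∧
    ∀ σ ∈ T, τ <+: σ → {n : ℕ | σ ++ [n] ∈ T}.Infinite

/-- `A` is upwards closed in the tree `T`. -/
def UpClosed (T A : Set (List ℕ)) : Prop :=
  ∀ σ ∈ A, ∀ ρ ∈ T, σ <+: ρ → ρ ∈ A

/-- The successor function on ω₁ ∪ {∞} (with ∞ + 1 = ∞), modelled on `WithTop Ordinal`. -/
def osucc : WithTop Ordinal → WithTop Ordinal := WithTop.map (· + 1)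

/-- An `(A, ω₁ ∪ {∞}, T)` Laver ranking (for a Laver tree `T` with stem `τ`):
`r σ = 0` iff `σ ∈ A`, and for `σ ∉ A`, `r σ` is the liminf over the children
`σ⌢n ∈ T` of `r (σ⌢n) + 1`, i.e. the least `x` such that infinitely many
children satisfy `r (σ⌢n) + 1 ≤ x`. -/
def IsLaverRanking (T A : Set (List ℕ)) (τ : List ℕ)
    (r : List ℕ → WithTop Ordinal) : Prop :=
  ∀ σ ∈ T, τ <+: σ →
    ((r σ = 0 ↔ σ ∈ A) ∧
      (σ ∉ A → IsLeast {x : WithTop Ordinal |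
        {n : ℕ | σ ++ [n] ∈ T ∧ osucc (r (σ ++ [n])) ≤ x}.Infinite} (r σ)))

/-- An `(A, L, T)` Laver ranking into a linear order `L` with least element `bot`
and successor function `succ`: `r σ = bot` iff `σ ∈ A`, and for `σ ∉ A`, `r σ` is
the `L`-least `x` such that infinitely many children `σ⌢n ∈ T` have
`succ (r (σ⌢n)) ≤ x`. -/
def IsGenLaverRanking {L : Type*} [LinearOrder L] (bot : L) (succ : L → L)
    (T A : Set (List ℕ)) (τ : List ℕ) (r : List ℕ → L) : Prop :=
  ∀ σ ∈ T, τ <+: σ →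
    ((r σ = bot ↔ σ ∈ A) ∧
      (σ ∉ A → IsLeast {x : L |
        {n : ℕ | σ ++ [n] ∈ T ∧ succ (r (σ ++ [n])) ≤ x}.Infinite} (r σ)))


lemma aux_iio_restrict {L : Type*} [LinearOrder L] {a b : L} (hba : b < a) {α : Ordinal}
    (e : Set.Iio a ≃o Set.Iio α) :
    ∃ β : Ordinal, β < α ∧ Nonempty (Set.Iio b ≃o Set.Iio β) := by
  refine ⟨(e ⟨b, hba⟩ : Ordinal), (e ⟨b, hba⟩).2, ⟨?_⟩⟩
  refine { toFun := fun y => ⟨(e ⟨y.1, y.2.trans hba⟩ : Ordinal), ?_⟩,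
           invFun := fun z => ⟨(e.symm ⟨z.1, Set.mem_Iio.mpr ((Set.mem_Iio.mp z.2).trans (e ⟨b, hba⟩).2)⟩ : L), ?_⟩,
           left_inv := ?_, right_inv := ?_, map_rel_iff' := ?_ }
  · exact Subtype.coe_lt_coe.mpr (e.lt_iff_lt.mpr (Subtype.mk_lt_mk.mpr y.2))
  · have h1 : e (e.symm ⟨z.1, Set.mem_Iio.mpr ((Set.mem_Iio.mp z.2).trans (e ⟨b, hba⟩).2)⟩) < e ⟨b, hba⟩ := by
      rw [e.apply_symm_apply]
      exact Subtype.mk_lt_mk.mpr z.2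
    exact Subtype.coe_lt_coe.mpr (e.lt_iff_lt.mp h1)
  · intro y
    apply Subtype.ext
    simp
  · intro z
    apply Subtype.ext
    have hz := congrArg Subtype.val (e.apply_symm_apply ⟨z.1, Set.mem_Iio.mpr ((Set.mem_Iio.mp z.2).trans (e ⟨b, hba⟩).2)⟩)
    exact hz
  · intro y y'
    constructor
    · intro h
      exact Subtype.mk_le_mk.mpr
        (Subtype.coe_le_coe.mpr (e.le_iff_le.mp (Subtype.coe_le_coe.mp h)))
    · intro h
      exact Subtype.mk_le_mk.mpr
        (Subtype.coe_le_coe.mpr (e.le_iff_le.mpr (Subtype.mk_le_mk.mpr h)))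

/-- let `r` be an `(A, L, T)` Laver ranking, where `L` is a linear
order with least element `bot`, greatest element `top` (= ∞) and a successor
function `succ` (with `succ top = top`), and let `rt` be the canonical
ordinal-valued Laver ranking.  Then there is no node `σ` with `r σ` in the
well-founded part `W(L)` of `L` whose ordinal rank (the order type `α` of the
elements below `r σ`) is strictly less than `rt σ`. -/
theorem no_ranking_smaller_than_canonical {L : Type*} [LinearOrder L]
    (bot top : L) (succ : L → L)
    (hbot : ∀ x, bot ≤ x) (htop : ∀ x, x ≤ top) (hstop : succ top = top)
    (hsucc_lt : ∀ x, x ≠ top → x < succ x)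
    (hsucc_le : ∀ x y, x < succ y → x ≤ y)
    (T A : Set (List ℕ)) (τ : List ℕ)
    (hT : IsLaverTree T τ) (hAT : A ⊆ T) (hA : UpClosed T A)
    (r : List ℕ → L) (hr : IsGenLaverRanking bot succ T A τ r)
    (rt : List ℕ → WithTop Ordinal) (hrt : IsLaverRanking T A τ rt) :
    ¬ ∃ σ ∈ T, τ <+: σ ∧ r σ ≠ top ∧ ∃ α : Ordinal,
        Nonempty (Set.Iio (r σ) ≃o Set.Iio α) ∧ (α : WithTop Ordinal) < rt σ := by
  rintro ⟨σ₀, hσ₀T, hpre₀, hne₀, α₀, ⟨e₀⟩, hα₀⟩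
  set S : Set Ordinal := {α | ∃ σ ∈ T, τ <+: σ ∧ r σ ≠ top ∧
    Nonempty (Set.Iio (r σ) ≃o Set.Iio α) ∧ (α : WithTop Ordinal) < rt σ} with hSdef
  have hS : α₀ ∈ S := ⟨σ₀, hσ₀T, hpre₀, hne₀, ⟨e₀⟩, hα₀⟩
  obtain ⟨m, hm, hmin⟩ := Ordinal.lt_wf.has_min S ⟨α₀, hS⟩
  obtain ⟨σ, hσT, hpre, hne, ⟨e⟩, hα⟩ := hm
  have hAσ : σ ∉ A := by
    intro hmem
    have h0 : rt σ = 0 := ((hrt σ hσT hpre).1).mpr hmem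
    rw [h0] at hα
    have h1 : ((0 : Ordinal) : WithTop Ordinal) ≤ (m : WithTop Ordinal) :=
      WithTop.coe_le_coe.mpr zero_le
    exact absurd hα (not_lt.mpr (by simpa using h1))
  have hleast := (hr σ hσT hpre).2 hAσ
  have hrtleast := (hrt σ hσT hpre).2 hAσ
  have hinf : {n | σ ++ [n] ∈ T ∧ succ (r (σ ++ [n])) ≤ r σ}.Infinite := hleast.1
  have key : ∀ n, σ ++ [n] ∈ T → succ (r (σ ++ [n])) ≤ r σ →
      osucc (rt (σ ++ [n])) ≤ (m : WithTop Ordinal) := by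
    intro n hnT hnle
    have hchild_ne : r (σ ++ [n]) ≠ top := by
      intro h
      rw [h, hstop] at hnle
      exact hne (le_antisymm (htop _) hnle)
    have hlt : r (σ ++ [n]) < r σ := lt_of_lt_of_le (hsucc_lt _ hchild_ne) hnle
    obtain ⟨β, hβm, hiso⟩ := aux_iio_restrict hlt e
    have hnotS : ¬ ((β : WithTop Ordinal) < rt (σ ++ [n])) := fun h =>
      hmin β ⟨σ ++ [n], hnT, hpre.trans (List.prefix_append σ [n]), hchild_ne, hiso, h⟩ hβm
    have hle : rt (σ ++ [n]) ≤ (β : WithTop Ordinal) := not_lt.mp hnotS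
    obtain ⟨γ, hγ, hγβ⟩ := WithTop.le_coe_iff.mp hle
    rw [hγ]
    show ((γ + 1 : Ordinal) : WithTop Ordinal) ≤ (m : WithTop Ordinal)
    exact WithTop.coe_le_coe.mpr (Order.add_one_le_iff.mpr (lt_of_le_of_lt hγβ hβm))
  have hmem : (m : WithTop Ordinal) ∈ {x : WithTop Ordinal |
      {n : ℕ | σ ++ [n] ∈ T ∧ osucc (rt (σ ++ [n])) ≤ x}.Infinite} :=
    hinf.mono (fun n hn => ⟨hn.1, key n hn.1 hn.2⟩)
  exact absurd (hrtleast.2 hmem) (not_le.mpr hα)
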